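/- For every fixed κ ≥ 1, the function E ↦ g((κ − 1/2)E + κ − 1) − g(E/2) is nonincreasing on [0,∞) and converges to ln(2κ − 1) as E → ∞. -/

import Mathlib

open Real Filter Set

noncomputable def g (x : ℝ) : ℝ := (x + 1) * Real.log (x + 1) - x * Real.log x

-- log z ≤ (z - z⁻¹)/2 for z ≥ 1
lemma log_le_half_sub_inv {z : ℝ} (hz : 1 ≤ z) : Real.log z ≤ (z - z⁻¹) / 2 := by
  have hmono : MonotoneOn (fun z : ℝ => (z - z⁻¹) / 2 - Real.log z) (Set.Ici 1) := by
    apply monotoneOn_of_hasDerivWithinAt_nonneg (f' := fun z => (1 + (z⁻¹)^2) / 2 - z⁻¹)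
      (convex_Ici 1)
    · apply ContinuousOn.sub
      · exact (continuousOn_id.sub (continuousOn_inv₀.mono (by
          intro x hx; simp at hx ⊢; intro h; rw [h] at hx; linarith))).div_const 2
      · exact Real.continuousOn_log.mono (by intro x hx; simp at hx ⊢; intro h; rw [h] at hx; linarith)
    · intro x hx
      rw [interior_Ici] at hx
      have hx1 : (1:ℝ) < x := hx
      have hx0 : x ≠ 0 := by intro h; rw [h] at hx1; linarith
      have h1 : HasDerivAt (fun z : ℝ => (z - z⁻¹) / 2 - Real.log z)
          ((1 - (-(x^2)⁻¹)) / 2 - x⁻¹) x :=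
        (((hasDerivAt_id x).sub (hasDerivAt_inv hx0)).div_const 2).sub
          (Real.hasDerivAt_log hx0)
      have heq : (1 - (-(x^2)⁻¹)) / 2 - x⁻¹ = (1 + (x⁻¹)^2) / 2 - x⁻¹ := by
        field_simp
        ring
      rw [heq] at h1
      exact h1.hasDerivWithinAt
    · intro x hx
      rw [interior_Ici] at hx
      have hx1 : (1:ℝ) < x := hx
      have hx0 : 0 < x := by linarith
      have hxi : x⁻¹ ≤ 1 := by
        rw [inv_le_one_iff₀]; right; linarith
      have hxi0 : 0 < x⁻¹ := inv_pos.2 hx0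
      nlinarith [sq_nonneg (x⁻¹ - 1)]
  have := hmono (Set.self_mem_Ici) (Set.mem_Ici.2 hz) hz
  simp at this
  linarith

-- ψ(s) = s (log(s+1) − log(s−1)) is antitone on Ioi 1
lemma psi_antitone : AntitoneOn (fun s : ℝ => s * (Real.log (s+1) - Real.log (s-1)))
    (Set.Ioi 1) := by
  apply antitoneOn_of_hasDerivWithinAt_nonpos (convex_Ioi 1)
    (f' := fun s => (Real.log (s+1) - Real.log (s-1)) + s * (1/(s+1) - 1/(s-1)))
  · apply ContinuousOn.mul continuousOn_id
    apply ContinuousOn.sub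
    · exact Real.continuousOn_log.comp (by fun_prop)
        (by intro x hx; simp only [Set.mem_Ioi] at hx; simp; intro h; linarith)
    · exact Real.continuousOn_log.comp (by fun_prop)
        (by intro x hx; simp only [Set.mem_Ioi] at hx; simp; intro h; linarith)
  · intro s hs
    rw [interior_Ioi] at hs
    have hs1 : (1:ℝ) < s := hs
    have h1 : HasDerivAt (fun s : ℝ => Real.log (s+1)) (1/(s+1)) s :=
      ((hasDerivAt_id s).add_const 1).log (by simp only [id_eq]; intro h; linarith)
    have h2 : HasDerivAt (fun s : ℝ => Real.log (s-1)) (1/(s-1)) s :=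
      ((hasDerivAt_id s).sub_const 1).log (by simp only [id_eq]; intro h; rw [sub_eq_zero] at h; exact hs1.ne' h)
    have h := (hasDerivAt_id s).mul (h1.sub h2)
    simp only [one_mul, id_eq] at h
    exact (h.congr_deriv (by simp only [Pi.sub_apply])).hasDerivWithinAt
  · intro s hs
    rw [interior_Ioi] at hs
    have hs1 : (1:ℝ) < s := hs
    have hne1 : s - 1 ≠ 0 := by intro h; rw [sub_eq_zero] at h; exact hs1.ne' h
    have hne2 : s + 1 ≠ 0 := by intro h; linarith
    have hz1 : (1:ℝ) ≤ (s+1)/(s-1) := by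
      rw [le_div_iff₀ (by linarith)]; linarith
    have hkey := log_le_half_sub_inv hz1
    have hlog : Real.log ((s+1)/(s-1)) = Real.log (s+1) - Real.log (s-1) :=
      Real.log_div hne2 hne1
    rw [hlog] at hkey
    have hrw : ((s+1)/(s-1) - ((s+1)/(s-1))⁻¹) / 2 = 2*s/((s-1)*(s+1)) := by
      rw [inv_div]
      field_simp
      ring
    rw [hrw] at hkey
    have hfinal : s * (1/(s+1) - 1/(s-1)) = -(2*s/((s-1)*(s+1))) := by
      field_simp
      ring
    rw [hfinal]
    linarith

lemma r_tendsto : Filter.Tendsto (fun x : ℝ => (x+1) * Real.log (1 + 1/x))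
    Filter.atTop (nhds 1) := by
  have h1 : Filter.Tendsto (fun x : ℝ => x * Real.log (1 + 1/x)) Filter.atTop (nhds 1) :=
    Real.tendsto_mul_log_one_add_div_atTop 1
  have h2 : Filter.Tendsto (fun x : ℝ => Real.log (1 + 1/x)) Filter.atTop (nhds 0) := by
    have h3 : Filter.Tendsto (fun x : ℝ => 1 + 1/x) Filter.atTop (nhds 1) := by
      simpa [one_div] using (tendsto_const_nhds (x := (1:ℝ))).add tendsto_inv_atTop_zero
    have := (Real.continuousAt_log one_ne_zero).tendsto.comp h3
    simpa [Function.comp_def] using this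
  have := h1.add h2
  simp only [add_zero] at this
  exact this.congr (fun x => by ring)


lemma g_cont : Continuous g := by
  unfold g
  exact (Real.continuous_mul_log.comp (continuous_id.add continuous_const)).sub
    Real.continuous_mul_log

lemma g_hasDerivAt {x : ℝ} (hx : 0 < x) :
    HasDerivAt g (Real.log (x+1) - Real.log x) x := by
  have h1 : HasDerivAt (fun x : ℝ => (x+1) * Real.log (x+1))
      (1 * Real.log (x+1) + (x+1) * (1/(x+1))) x :=
    ((hasDerivAt_id x).add_const 1).mul
      (((hasDerivAt_id x).add_const 1).log (by simp only [id_eq]; intro h; linarith))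
  have h2 : HasDerivAt (fun x : ℝ => x * Real.log x)
      (1 * Real.log x + x * (1/x)) x :=
    (hasDerivAt_id x).mul ((hasDerivAt_id x).log hx.ne')
  have h := h1.sub h2
  have heq : 1 * Real.log (x+1) + (x+1) * (1/(x+1)) - (1 * Real.log x + x * (1/x))
      = Real.log (x+1) - Real.log x := by
    field_simp
    ring
  rw [heq] at h
  exact h

lemma g_eq {x : ℝ} (hx : 0 < x) :
    g x = Real.log x + (x+1) * Real.log (1 + 1/x) := by
  have h1 : (1:ℝ) + 1/x = (x+1)/x := by field_simp
  rw [h1, Real.log_div (by linarith) hx.ne']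
  unfold g
  ring

/-- for fixed `κ ≥ 1`, `E ↦ g((κ−1/2)E + κ−1) − g(E/2)` is
nonincreasing on `[0,∞)` and converges to `ln(2κ−1)` as `E → ∞`. -/
theorem upper_bound_antitone_limit (κ : ℝ) (hκ : 1 ≤ κ) :
    AntitoneOn (fun E : ℝ => g ((κ - 1 / 2) * E + κ - 1) - g (E / 2)) (Set.Ici 0) ∧
    Filter.Tendsto (fun E : ℝ => g ((κ - 1 / 2) * E + κ - 1) - g (E / 2))
      Filter.atTop (nhds (Real.log (2 * κ - 1))) := by
  constructor
  · -- Antitone part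
    apply antitoneOn_of_hasDerivWithinAt_nonpos (convex_Ici 0)
      (f' := fun E => (κ - 1/2) * (Real.log ((κ - 1/2) * E + κ - 1 + 1)
          - Real.log ((κ - 1/2) * E + κ - 1))
        - (1/2) * (Real.log (E/2 + 1) - Real.log (E/2)))
    · exact ((g_cont.comp (by continuity)).sub (g_cont.comp (by continuity))).continuousOn
    · intro E hE
      rw [interior_Ici] at hE
      have hE0 : 0 < E := hE
      set u : ℝ := (κ - 1/2) * E + κ - 1 with hu_def
      have hu0 : 0 < u := by rw [hu_def]; nlinarith
      have hdu : HasDerivAt (fun E : ℝ => (κ - 1/2) * E + κ - 1) (κ - 1/2) E := by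
        have := (((hasDerivAt_id E).const_mul (κ - 1/2)).add_const κ).sub_const 1
        simpa using this
      have hdv : HasDerivAt (fun E : ℝ => E / 2) (1/2) E := by
        simpa using (hasDerivAt_id E).div_const 2
      have hgu := (g_hasDerivAt hu0).comp E hdu
      have hgv := (g_hasDerivAt (by positivity : (0:ℝ) < E/2)).comp E hdv
      have h := hgu.sub hgv
      have heq : (Real.log (u+1) - Real.log u) * (κ - 1/2)
          - (Real.log (E/2+1) - Real.log (E/2)) * (1/2)
          = (κ - 1/2) * (Real.log ((κ - 1/2) * E + κ - 1 + 1)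
              - Real.log ((κ - 1/2) * E + κ - 1))
            - (1/2) * (Real.log (E/2 + 1) - Real.log (E/2)) := by
        rw [← hu_def]; ring
      rw [heq] at h
      exact h.hasDerivWithinAt
    · intro E hE
      rw [interior_Ici] at hE
      have hE0 : 0 < E := hE
      set u : ℝ := (κ - 1/2) * E + κ - 1 with hu_def
      have hu0 : 0 < u := by rw [hu_def]; nlinarith
      have hs1 : (1:ℝ) < E + 1 := by linarith
      have hs2 : E + 1 ≤ (2*κ - 1) * (E + 1) := by nlinarith
      have hψ := psi_antitone (Set.mem_Ioi.2 hs1)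
        (Set.mem_Ioi.2 (lt_of_lt_of_le hs1 hs2)) hs2
      simp only at hψ
      have e1 : Real.log ((2*κ-1)*(E+1) + 1) = Real.log 2 + Real.log (u + 1) := by
        rw [show (2*κ-1)*(E+1) + 1 = 2 * (u + 1) by rw [hu_def]; ring]
        exact Real.log_mul two_ne_zero (by linarith)
      have e2 : Real.log ((2*κ-1)*(E+1) - 1) = Real.log 2 + Real.log u := by
        rw [show (2*κ-1)*(E+1) - 1 = 2 * u by rw [hu_def]; ring]
        exact Real.log_mul two_ne_zero hu0.ne'
      have e3 : Real.log (E + 1 + 1) = Real.log 2 + Real.log (E/2 + 1) := by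
        rw [show E + 1 + 1 = 2 * (E/2 + 1) by ring]
        exact Real.log_mul two_ne_zero (by linarith)
      have e4 : Real.log (E + 1 - 1) = Real.log 2 + Real.log (E/2) := by
        rw [show E + 1 - 1 = 2 * (E/2) by ring]
        exact Real.log_mul two_ne_zero (by positivity)
      rw [e1, e2, e3, e4] at hψ
      have hψ' : (2*κ-1) * (E+1) * (Real.log (u+1) - Real.log u)
          ≤ (E+1) * (Real.log (E/2+1) - Real.log (E/2)) := by nlinarith [hψ]
      have hE1 : (0:ℝ) < E + 1 := by linarith
      nlinarith [hψ', hE1]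
  · -- Limit part
    have hulim : Filter.Tendsto (fun E : ℝ => (κ - 1/2) * E + κ - 1)
        Filter.atTop Filter.atTop := by
      have h1 : Filter.Tendsto (fun E : ℝ => (κ - 1/2) * E) Filter.atTop Filter.atTop :=
        Filter.Tendsto.const_mul_atTop (by linarith) tendsto_id
      have := Filter.tendsto_atTop_add_const_right Filter.atTop (κ - 1) h1
      exact this.congr (fun E => by ring)
    have hvlim : Filter.Tendsto (fun E : ℝ => E / 2) Filter.atTop Filter.atTop := by
      have := Filter.Tendsto.const_mul_atTop (by norm_num : (0:ℝ) < 1/2) tendsto_id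
      exact this.congr (fun E => by simp only [id_eq]; ring)
    have h1 := r_tendsto.comp hulim
    have h2 := r_tendsto.comp hvlim
    have h3 : Filter.Tendsto (fun E : ℝ => Real.log ((2*κ - 1) + (2*κ - 2)/E))
        Filter.atTop (nhds (Real.log (2*κ - 1))) := by
      have hinner : Filter.Tendsto (fun E : ℝ => (2*κ - 1) + (2*κ - 2)/E)
          Filter.atTop (nhds (2*κ - 1)) := by
        have := tendsto_inv_atTop_zero.const_mul (2*κ - 2)
        simp only [mul_zero] at this
        have := (tendsto_const_nhds (x := (2*κ - 1))).add this
        simp only [add_zero] at this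
        exact this.congr (fun E => by rw [div_eq_mul_inv])
      exact ((Real.continuousAt_log (by intro h; linarith)).tendsto.comp hinner)
    have hcomb := (h3.add h1).sub h2
    simp only [add_sub_cancel_right] at hcomb
    apply hcomb.congr'
    filter_upwards [Filter.eventually_gt_atTop 0] with E hE0
    simp only [Function.comp]
    set u : ℝ := (κ - 1/2) * E + κ - 1 with hu_def
    have hu0 : 0 < u := by rw [hu_def]; nlinarith
    have hv0 : 0 < E/2 := by positivity
    have hgu := g_eq hu0
    have hgv := g_eq hv0
    have hlog : Real.log u - Real.log (E/2) = Real.log ((2*κ - 1) + (2*κ - 2)/E) := by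
      rw [← Real.log_div hu0.ne' hv0.ne']
      congr 1
      field_simp
      ring
    rw [hgu, hgv]
    linarith [hlog]
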